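/- In a group G generated by involutions r0, r1, r2 satisfying r_i r_j r_k = r_k r_j r_i for all permutations of (0,1,2), for integers m > 0 > n with m ≥ |n|, the element (r0 r1)^m (r0 r2)^n can be written as a product of exactly 2m generators, namely (r0 r1)^(m−|n|) · (r2 r1)^(|n|). -/
import Mathlib


theorem stmt17 {G : Type*} [Group G] (r : Fin 3 → G)
    (hinv : ∀ i, r i * r i = 1)
    (hrel : ∀ i j k : Fin 3, i ≠ j → j ≠ k → i ≠ k →
      r i * r j * r k = r k * r j * r i) :
    ∀ m n : ℤ, 0 < m → n < 0 → -n ≤ m →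
      (r 0 * r 1) ^ m * (r 0 * r 2) ^ n =
        (r 0 * r 1) ^ (m + n) * (r 2 * r 1) ^ (-n) := by
  have hinv' : ∀ i, (r i)⁻¹ = r i := fun i => inv_eq_of_mul_eq_one_right (hinv i)
  set a := r 0 * r 1 with ha
  set b := r 2 * r 0 with hb
  set c := r 2 * r 1 with hc
  have hab : a * b = c := by
    have h := hrel 0 1 2 (by decide) (by decide) (by decide)
    calc a * b = (r 0 * r 1 * r 2) * r 0 := by rw [ha, hb]; group
    _ = (r 2 * r 1 * r 0) * r 0 := by rw [h]
    _ = r 2 * r 1 * (r 0 * r 0) := by group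
    _ = c := by rw [hinv 0, hc]; group
  have hbc : Commute b c := by
    have h := hrel 0 2 1 (by decide) (by decide) (by decide)
    show b * c = c * b
    calc b * c = r 2 * (r 0 * r 2 * r 1) := by rw [hb, hc]; group
    _ = r 2 * (r 1 * r 2 * r 0) := by rw [h]
    _ = c * b := by rw [hb, hc]; group
  have hbinv : (r 0 * r 2)⁻¹ = b := by
    rw [mul_inv_rev, hinv' 0, hinv' 2]
  have key : ∀ k : ℕ, a ^ k * b ^ k = c ^ k := by
    intro k
    induction k with
    | zero => simp
    | succ k ih =>
      have hck : Commute (b⁻¹) (c ^ k) := (hbc.inv_left).pow_right k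
      have haeq : a = c * b⁻¹ := by rw [← hab]; group
      calc a ^ (k + 1) * b ^ (k + 1) = a * (a ^ k * b ^ k) * b := by
            rw [pow_succ, pow_succ']; group
      _ = a * c ^ k * b := by rw [ih]
      _ = c * (b⁻¹ * c ^ k) * b := by rw [haeq]; group
      _ = c * (c ^ k * b⁻¹) * b := by rw [hck.eq]
      _ = c ^ (k + 1) := by rw [pow_succ']; group
  intro m n hm hn hmn
  set k := (-n).toNat with hk
  have hkn : (k : ℤ) = -n := Int.toNat_of_nonneg (by omega)
  have h1 : (r 0 * r 2) ^ n = b ^ k := by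
    rw [← hbinv, ← zpow_natCast, hkn, zpow_neg, inv_zpow, inv_inv]
  have h2 : (r 2 * r 1) ^ (-n) = c ^ k := by
    rw [← hkn, zpow_natCast]
  have h3 : (r 0 * r 1) ^ m = (r 0 * r 1) ^ (m + n) * a ^ k := by
    rw [ha, ← zpow_natCast, hkn, ← zpow_add]
    ring_nf
  rw [h1, h2, h3, mul_assoc, key k]
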